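/- arXiv:1903.01946 — 4 statements merged into one kernel-verified Lean document; each statement's English description precedes it below -/
import Mathlib

section
/- Let α > 0, μ > 0, Ω > 0, η₁ > 0 and K > 0, and define F(t) = γ(μ, μ t^{α/2}/Ω^α)/Γ(μ) and Φ₁(ρ) = η₁/(ρ K) for ρ > 0. Then lim_{ρ→∞} ρ^{αμ/2} · F(Φ₁(ρ)) = μ^μ η₁^{αμ/2} / (Ω^{αμ} K^{αμ/2} Γ(μ+1)). In particular, F(Φ₁(ρ)) decays as ρ^{−αμ/2} at high transmit SNR. -/
open Real Filter

/-- The lower incomplete Gamma function γ(s, x) = ∫₀ˣ t^{s−1} e^{−t} dt. -/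
noncomputable def lowerGamma (s x : ℝ) : ℝ :=
  ∫ t in (0 : ℝ)..x, t ^ (s - 1) * Real.exp (-t)


lemma lowerGamma_bounds (μ : ℝ) (hμ : 0 < μ) {x : ℝ} (hx : 0 < x) :
    Real.exp (-x) * (x ^ μ / μ) ≤ lowerGamma μ x ∧ lowerGamma μ x ≤ x ^ μ / μ := by
  have hint1 : IntervalIntegrable (fun t : ℝ => t ^ (μ - 1)) MeasureTheory.volume 0 x :=
    intervalIntegral.intervalIntegrable_rpow' (by linarith)
  have hint2 : IntervalIntegrable (fun t : ℝ => t ^ (μ - 1) * Real.exp (-t))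
      MeasureTheory.volume 0 x :=
    hint1.mul_continuousOn ((Real.continuous_exp.comp continuous_neg).continuousOn)
  have hrpow : (∫ t in (0:ℝ)..x, t ^ (μ - 1)) = x ^ μ / μ := by
    rw [integral_rpow (Or.inl (by linarith))]
    rw [Real.zero_rpow (by linarith)]
    ring_nf
  constructor
  · have : (∫ t in (0:ℝ)..x, Real.exp (-x) * t ^ (μ - 1)) ≤ lowerGamma μ x := by
      apply intervalIntegral.integral_mono_on hx.le (hint1.const_mul _) hint2
      intro t ht
      rw [mul_comm]
      exact mul_le_mul_of_nonneg_left (Real.exp_le_exp.2 (neg_le_neg ht.2))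
        (Real.rpow_nonneg ht.1 _)
    rwa [intervalIntegral.integral_const_mul, hrpow] at this
  · have : lowerGamma μ x ≤ ∫ t in (0:ℝ)..x, t ^ (μ - 1) := by
      apply intervalIntegral.integral_mono_on hx.le hint2 hint1
      intro t ht
      nth_rewrite 2 [show t ^ (μ-1) = t ^ (μ-1) * 1 by ring]
      exact mul_le_mul_of_nonneg_left (Real.exp_le_one_iff.2 (by linarith [ht.1]))
        (Real.rpow_nonneg ht.1 _)
    rwa [hrpow] at this

lemma core (μ : ℝ) (hμ : 0 < μ) :
    Tendsto (fun x => lowerGamma μ x / x ^ μ) (nhdsWithin 0 (Set.Ioi 0)) (nhds (1 / μ)) := by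
  have hlow : Tendsto (fun x : ℝ => Real.exp (-x) / μ) (nhdsWithin 0 (Set.Ioi 0))
      (nhds (1 / μ)) := by
    have : ContinuousAt (fun x : ℝ => Real.exp (-x) / μ) 0 := by fun_prop
    have h := this.tendsto.mono_left (nhdsWithin_le_nhds (s := Set.Ioi (0:ℝ)))
    simpa using h
  apply tendsto_of_tendsto_of_tendsto_of_le_of_le' hlow tendsto_const_nhds
  · filter_upwards [self_mem_nhdsWithin] with x hx
    have hx : (0:ℝ) < x := hx
    have hp : (0:ℝ) < x ^ μ := Real.rpow_pos_of_pos hx μ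
    rw [div_le_div_iff₀ hμ hp]
    calc Real.exp (-x) * x ^ μ = Real.exp (-x) * (x ^ μ / μ) * μ := by field_simp
    _ ≤ lowerGamma μ x * μ :=
      mul_le_mul_of_nonneg_right (lowerGamma_bounds μ hμ hx).1 hμ.le
  · filter_upwards [self_mem_nhdsWithin] with x hx
    have hx : (0:ℝ) < x := hx
    have hp : (0:ℝ) < x ^ μ := Real.rpow_pos_of_pos hx μ
    rw [div_le_div_iff₀ hp hμ]
    calc lowerGamma μ x * μ ≤ x ^ μ / μ * μ :=
      mul_le_mul_of_nonneg_right (lowerGamma_bounds μ hμ hx).2 hμ.le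
    _ = 1 * x ^ μ := by field_simp

/-- High-SNR decay of the channel-gain CDF at the outage threshold Φ₁(ρ) = η₁/(ρK):
ρ^{αμ/2}·F(Φ₁(ρ)) → μ^μ η₁^{αμ/2}/(Ω^{αμ} K^{αμ/2} Γ(μ+1)) as ρ → ∞. -/
theorem cdf_outage_threshold_decay (α μ Ω η₁ K : ℝ)
    (hα : 0 < α) (hμ : 0 < μ) (hΩ : 0 < Ω) (hη₁ : 0 < η₁) (hK : 0 < K) :
    Tendsto
      (fun ρ : ℝ =>
        ρ ^ (α * μ / 2) *
          (lowerGamma μ (μ * (η₁ / (ρ * K)) ^ (α / 2) / Ω ^ α) / Real.Gamma μ))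
      atTop
      (nhds (μ ^ μ * η₁ ^ (α * μ / 2) /
        (Ω ^ (α * μ) * K ^ (α * μ / 2) * Real.Gamma (μ + 1)))) := by
  set x : ℝ → ℝ := fun ρ => μ * (η₁ / (ρ * K)) ^ (α / 2) / Ω ^ α with hxdef
  have hΓ : (0:ℝ) < Real.Gamma μ := Real.Gamma_pos_of_pos hμ
  -- x tends to 0 from the right
  have h1 : Tendsto (fun ρ : ℝ => η₁ / (ρ * K)) atTop (nhds 0) :=
    Tendsto.div_atTop tendsto_const_nhds (tendsto_id.atTop_mul_const hK)
  have h2 : Tendsto x atTop (nhds 0) := by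
    have hc : ContinuousAt (fun y : ℝ => μ * y ^ (α / 2) / Ω ^ α) 0 :=
      (continuousAt_const.mul (Real.continuousAt_rpow_const 0 (α/2)
        (Or.inr (by positivity)))).div_const _
    have := hc.tendsto.comp h1
    simpa [Real.zero_rpow (show α/2 ≠ 0 by positivity), hxdef, Function.comp_def] using this
  have hxt : Tendsto x atTop (nhdsWithin 0 (Set.Ioi 0)) := by
    apply tendsto_nhdsWithin_of_tendsto_nhds_of_eventually_within _ h2
    filter_upwards [eventually_gt_atTop (0:ℝ)] with ρ hρ
    have : 0 < x ρ := by positivity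
    exact this
  have hcomp : Tendsto (fun ρ => lowerGamma μ (x ρ) / (x ρ) ^ μ) atTop (nhds (1/μ)) :=
    (core μ hμ).comp hxt
  set C : ℝ := μ ^ μ * η₁ ^ (α * μ / 2) / (Ω ^ (α * μ) * K ^ (α * μ / 2) * Real.Gamma μ)
    with hC
  have key : ∀ ρ : ℝ, 0 < ρ →
      ρ ^ (α * μ / 2) * (x ρ) ^ μ =
        μ ^ μ * η₁ ^ (α * μ / 2) / (Ω ^ (α * μ) * K ^ (α * μ / 2)) := by
    intro ρ hρ
    have hb : (0:ℝ) < η₁ / (ρ * K) := by positivity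
    rw [hxdef]
    simp only
    rw [Real.div_rpow (by positivity) (by positivity),
      Real.mul_rpow hμ.le (by positivity),
      ← Real.rpow_mul hb.le, ← Real.rpow_mul hΩ.le,
      Real.div_rpow hη₁.le (by positivity),
      Real.mul_rpow hρ.le hK.le]
    have he : α / 2 * μ = α * μ / 2 := by ring
    rw [he]
    have h1 : (0:ℝ) < ρ ^ (α * μ / 2) := Real.rpow_pos_of_pos hρ _
    have h2 : (0:ℝ) < K ^ (α * μ / 2) := Real.rpow_pos_of_pos hK _
    have h3 : (0:ℝ) < Ω ^ (α * μ) := Real.rpow_pos_of_pos hΩ _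
    field_simp
  have heq : ∀ᶠ ρ : ℝ in atTop,
      C * (lowerGamma μ (x ρ) / (x ρ) ^ μ) =
      ρ ^ (α * μ / 2) * (lowerGamma μ (x ρ) / Real.Gamma μ) := by
    filter_upwards [eventually_gt_atTop (0:ℝ)] with ρ hρ
    have hxp : (0:ℝ) < x ρ := by rw [hxdef]; positivity
    have hxμ : (0:ℝ) < (x ρ) ^ μ := Real.rpow_pos_of_pos hxp μ
    have hk := key ρ hρ
    have hpos : (0:ℝ) < Ω ^ (α * μ) * K ^ (α * μ / 2) :=
      mul_pos (Real.rpow_pos_of_pos hΩ _) (Real.rpow_pos_of_pos hK _)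
    have hk' : μ ^ μ * η₁ ^ (α * μ / 2) =
        ρ ^ (α * μ / 2) * x ρ ^ μ * (Ω ^ (α * μ) * K ^ (α * μ / 2)) := by
      rw [hk]
      field_simp
    rw [hC, hk']
    field_simp
  have : Tendsto (fun ρ => C * (lowerGamma μ (x ρ) / (x ρ) ^ μ)) atTop (nhds (C * (1/μ))) :=
    hcomp.const_mul C
  have hfin := this.congr' heq
  convert hfin using 2
  rw [hC, Real.Gamma_add_one hμ.ne']
  field_simp
end

section
/- Let α_sr, μ_sr, Ω_sr, α_sd, μ_sd, Ω_sd, η₁, K all be positive reals. For ρ > 0 define Φ₁(ρ) = η₁/(ρK), A(ρ) = γ(μ_sr, (μ_sr/Ω_sr^{α_sr})·Φ₁(ρ)^{α_sr/2})/Γ(μ_sr), B(ρ) = γ(μ_sd, (μ_sd/Ω_sd^{α_sd})·Φ₁(ρ)^{α_sd/2})/Γ(μ_sd), and the outage probability P₁(ρ) = A(ρ) + B(ρ) − A(ρ)B(ρ). Then with d = (1/2)·min(α_sr μ_sr, α_sd μ_sd), there exists a constant C > 0 such that lim_{ρ→∞} ρ^d · P₁(ρ) = C. Hence the diversity order of symbol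 s₁ in CRS-NOMA is (1/2)·min(α_sr μ_sr, α_sd μ_sd). -/
open Real Filter

lemma lowerGamma_div_tendsto (s : ℝ) (hs : 0 < s) :
    Tendsto (fun x => lowerGamma s x / x ^ s) (nhdsWithin 0 (Set.Ioi 0)) (nhds (1 / s)) := by
  have hlow : Tendsto (fun x : ℝ => Real.exp (-x) / s) (nhdsWithin 0 (Set.Ioi 0)) (nhds (1 / s)) := by
    have h : Tendsto (fun x : ℝ => Real.exp (-x) / s) (nhds 0) (nhds (1 / s)) := by
      have := ((Real.continuous_exp.comp continuous_neg).tendsto 0).div_const s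
      simpa using this
    exact h.mono_left nhdsWithin_le_nhds
  refine tendsto_of_tendsto_of_tendsto_of_le_of_le' hlow tendsto_const_nhds ?_ ?_
  · filter_upwards [self_mem_nhdsWithin] with x hx
    have hx0 : (0:ℝ) < x := hx
    have hxs : 0 < x ^ s := Real.rpow_pos_of_pos hx0 s
    have hint : IntervalIntegrable (fun t : ℝ => t ^ (s - 1)) MeasureTheory.volume 0 x :=
      intervalIntegral.intervalIntegrable_rpow' (by linarith)
    have hint2 : IntervalIntegrable (fun t : ℝ => t ^ (s - 1) * Real.exp (-t))
        MeasureTheory.volume 0 x :=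
      hint.mul_continuousOn (Continuous.continuousOn (by continuity))
    have hval : (∫ t in (0:ℝ)..x, t ^ (s - 1)) = x ^ s / s := by
      rw [integral_rpow (Or.inl (by linarith))]
      have h1 : s - 1 + 1 = s := by ring
      rw [h1, Real.zero_rpow hs.ne', sub_zero]
    have hlower' : Real.exp (-x) * (x ^ s / s) ≤ lowerGamma s x := by
      have hconst : (∫ t in (0:ℝ)..x, Real.exp (-x) * t ^ (s - 1))
          = Real.exp (-x) * (x ^ s / s) := by
        rw [intervalIntegral.integral_const_mul, hval]
      rw [← hconst]
      apply intervalIntegral.integral_mono_on hx0.le (hint.const_mul _) hint2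
      intro t ht
      rw [mul_comm]
      exact mul_le_mul_of_nonneg_left (Real.exp_le_exp.mpr (by linarith [ht.2]))
        (Real.rpow_nonneg ht.1 _)
    rw [le_div_iff₀ hxs]
    have h' : Real.exp (-x) / s * x ^ s = Real.exp (-x) * (x ^ s / s) := by ring
    rw [h']; exact hlower'
  · filter_upwards [self_mem_nhdsWithin] with x hx
    have hx0 : (0:ℝ) < x := hx
    have hxs : 0 < x ^ s := Real.rpow_pos_of_pos hx0 s
    have hint : IntervalIntegrable (fun t : ℝ => t ^ (s - 1)) MeasureTheory.volume 0 x :=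
      intervalIntegral.intervalIntegrable_rpow' (by linarith)
    have hint2 : IntervalIntegrable (fun t : ℝ => t ^ (s - 1) * Real.exp (-t))
        MeasureTheory.volume 0 x :=
      hint.mul_continuousOn (Continuous.continuousOn (by continuity))
    have hval : (∫ t in (0:ℝ)..x, t ^ (s - 1)) = x ^ s / s := by
      rw [integral_rpow (Or.inl (by linarith))]
      have h1 : s - 1 + 1 = s := by ring
      rw [h1, Real.zero_rpow hs.ne', sub_zero]
    have hupper : lowerGamma s x ≤ x ^ s / s := by
      rw [← hval]
      apply intervalIntegral.integral_mono_on hx0.le hint2 hint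
      intro t ht
      have h1 : Real.exp (-t) ≤ 1 := Real.exp_le_one_iff.mpr (neg_nonpos.mpr ht.1)
      have h2 : 0 ≤ t ^ (s - 1) := Real.rpow_nonneg ht.1 _
      nlinarith
    rw [div_le_iff₀ hxs]
    have h' : 1 / s * x ^ s = x ^ s / s := by ring
    rw [h']; exact hupper

lemma term_tendsto (α μ Ω η K : ℝ) (hα : 0 < α) (hμ : 0 < μ) (hΩ : 0 < Ω)
    (hη : 0 < η) (hK : 0 < K) :
    Tendsto (fun ρ : ℝ => ρ ^ (α * μ / 2) *
        (lowerGamma μ ((μ / Ω ^ α) * (η / (ρ * K)) ^ (α / 2)) / Real.Gamma μ))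
      atTop
      (nhds ((μ / Ω ^ α) ^ μ * (η / K) ^ (α * μ / 2) / (μ * Real.Gamma μ))) := by
  have hΩα : 0 < Ω ^ α := Real.rpow_pos_of_pos hΩ α
  have hc : 0 < μ / Ω ^ α := div_pos hμ hΩα
  have hΓ : 0 < Real.Gamma μ := Real.Gamma_pos_of_pos hμ
  have hηK : 0 < η / K := div_pos hη hK
  have hC₀ : 0 < (μ / Ω ^ α) * (η / K) ^ (α / 2) :=
    mul_pos hc (Real.rpow_pos_of_pos hηK _)
  have hxeq : ∀ ρ : ℝ, 0 < ρ →
      (μ / Ω ^ α) * (η / (ρ * K)) ^ (α / 2)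
        = ((μ / Ω ^ α) * (η / K) ^ (α / 2)) * ρ ^ (-(α / 2)) := by
    intro ρ hρ
    have h1 : η / (ρ * K) = (η / K) * ρ⁻¹ := by
      rw [mul_comm ρ K, ← div_div, div_eq_mul_inv]
    rw [h1, Real.mul_rpow hηK.le (inv_nonneg.mpr hρ.le),
        Real.inv_rpow hρ.le, ← Real.rpow_neg hρ.le]
    ring
  have hx0 : Tendsto (fun ρ : ℝ => (μ / Ω ^ α) * (η / (ρ * K)) ^ (α / 2)) atTop
      (nhdsWithin 0 (Set.Ioi 0)) := by
    rw [tendsto_nhdsWithin_iff]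
    constructor
    · have h := (tendsto_rpow_neg_atTop (by positivity : (0:ℝ) < α / 2)).const_mul
        ((μ / Ω ^ α) * (η / K) ^ (α / 2))
      simp only [mul_zero] at h
      exact Tendsto.congr'
        (by filter_upwards [eventually_gt_atTop 0] with ρ hρ using (hxeq ρ hρ).symm) h
    · filter_upwards [eventually_gt_atTop 0] with ρ hρ
      exact mul_pos hc (Real.rpow_pos_of_pos (div_pos hη (mul_pos hρ hK)) _)
  have h2 := (lowerGamma_div_tendsto μ hμ).comp hx0
  have h3 := h2.mul_const ((μ / Ω ^ α) ^ μ * (η / K) ^ (α * μ / 2) / Real.Gamma μ)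
  have hval : 1 / μ * ((μ / Ω ^ α) ^ μ * (η / K) ^ (α * μ / 2) / Real.Gamma μ)
      = (μ / Ω ^ α) ^ μ * (η / K) ^ (α * μ / 2) / (μ * Real.Gamma μ) := by
    field_simp
  rw [hval] at h3
  refine Tendsto.congr' ?_ h3
  filter_upwards [eventually_gt_atTop 0] with ρ hρ
  simp only [Function.comp_apply]
  have hxpos : 0 < (μ / Ω ^ α) * (η / (ρ * K)) ^ (α / 2) :=
    mul_pos hc (Real.rpow_pos_of_pos (div_pos hη (mul_pos hρ hK)) _)
  have hkey : ρ ^ (α * μ / 2) * ((μ / Ω ^ α) * (η / (ρ * K)) ^ (α / 2)) ^ μ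
      = (μ / Ω ^ α) ^ μ * (η / K) ^ (α * μ / 2) := by
    rw [hxeq ρ hρ,
        Real.mul_rpow hC₀.le (Real.rpow_nonneg hρ.le _),
        ← Real.rpow_mul hρ.le,
        Real.mul_rpow hc.le (Real.rpow_nonneg hηK.le _),
        ← Real.rpow_mul hηK.le]
    have e1 : α / 2 * μ = α * μ / 2 := by ring
    rw [e1]
    have e2 : ρ ^ (α * μ / 2) * ρ ^ (-(α / 2) * μ) = 1 := by
      rw [← Real.rpow_add hρ]
      have : α * μ / 2 + -(α / 2) * μ = 0 := by ring
      rw [this, Real.rpow_zero]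
    linear_combination ((μ / Ω ^ α) ^ μ * (η / K) ^ (α * μ / 2)) * e2
  have hxm : ((μ / Ω ^ α) * (η / (ρ * K)) ^ (α / 2)) ^ μ ≠ 0 :=
    (Real.rpow_pos_of_pos hxpos μ).ne'
  rw [← hkey]
  field_simp

lemma decomp (ρ : ℝ) (hρ : 0 < ρ) (d dA dB F G : ℝ) :
    ρ ^ (d - dA) * (ρ ^ dA * F) + ρ ^ (d - dB) * (ρ ^ dB * G)
      - ρ ^ (d - dA - dB) * (ρ ^ dA * F) * (ρ ^ dB * G)
      = ρ ^ d * (F + G - F * G) := by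
  have e1 : ρ ^ (d - dA) * ρ ^ dA = ρ ^ d := by
    rw [← Real.rpow_add hρ]; congr 1; ring
  have e2 : ρ ^ (d - dB) * ρ ^ dB = ρ ^ d := by
    rw [← Real.rpow_add hρ]; congr 1; ring
  have e3 : ρ ^ (d - dA - dB) * ρ ^ dA * ρ ^ dB = ρ ^ d := by
    rw [← Real.rpow_add hρ, ← Real.rpow_add hρ]; congr 1; ring
  linear_combination F * e1 + G * e2 - F * G * e3

lemma combine (dA dB LA LB : ℝ) (hdA : 0 < dA) (hdB : 0 < dB)
    (hLA : 0 < LA) (hLB : 0 < LB) (F G : ℝ → ℝ)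
    (tA : Tendsto (fun ρ : ℝ => ρ ^ dA * F ρ) atTop (nhds LA))
    (tB : Tendsto (fun ρ : ℝ => ρ ^ dB * G ρ) atTop (nhds LB)) :
    ∃ C : ℝ, 0 < C ∧
      Tendsto (fun ρ : ℝ => ρ ^ (min dA dB) * (F ρ + G ρ - F ρ * G ρ)) atTop (nhds C) := by
  classical
  set d := min dA dB with hd
  refine ⟨(if dA ≤ dB then LA else 0) + (if dB ≤ dA then LB else 0), ?_, ?_⟩
  · rcases le_total dA dB with h | h
    · rw [if_pos h]
      have h2 : (0:ℝ) ≤ if dB ≤ dA then LB else 0 := by split <;> [exact hLB.le; exact le_rfl]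
      linarith
    · rw [if_pos h]
      have h2 : (0:ℝ) ≤ if dA ≤ dB then LA else 0 := by split <;> [exact hLA.le; exact le_rfl]
      linarith
  · have pA : Tendsto (fun ρ : ℝ => ρ ^ (d - dA)) atTop
        (nhds (if dA ≤ dB then (1:ℝ) else 0)) := by
      rcases le_or_gt dA dB with h | h
      · rw [if_pos h]
        have hdd : d - dA = 0 := by rw [hd, min_eq_left h, sub_self]
        simp only [hdd, Real.rpow_zero]
        exact tendsto_const_nhds
      · rw [if_neg (not_le.mpr h)]
        have h1 : 0 < dA - d := by
          have : d = dB := min_eq_right h.le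
          rw [this]; linarith
        have ht := tendsto_rpow_neg_atTop h1
        rw [show -(dA - d) = d - dA by ring] at ht
        exact ht
    have pB : Tendsto (fun ρ : ℝ => ρ ^ (d - dB)) atTop
        (nhds (if dB ≤ dA then (1:ℝ) else 0)) := by
      rcases le_or_gt dB dA with h | h
      · rw [if_pos h]
        have hdd : d - dB = 0 := by rw [hd, min_eq_right h, sub_self]
        simp only [hdd, Real.rpow_zero]
        exact tendsto_const_nhds
      · rw [if_neg (not_le.mpr h)]
        have h1 : 0 < dB - d := by
          have : d = dA := min_eq_left h.le
          rw [this]; linarith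
        have ht := tendsto_rpow_neg_atTop h1
        rw [show -(dB - d) = d - dB by ring] at ht
        exact ht
    have pC : Tendsto (fun ρ : ℝ => ρ ^ (d - dA - dB)) atTop (nhds 0) := by
      have hdle : d ≤ dA := min_le_left dA dB
      have h1 : 0 < dA + dB - d := by linarith
      have ht := tendsto_rpow_neg_atTop h1
      rw [show -(dA + dB - d) = d - dA - dB by ring] at ht
      exact ht
    have T := ((pA.mul tA).add (pB.mul tB)).sub ((pC.mul tA).mul tB)
    have hlim : (if dA ≤ dB then (1:ℝ) else 0) * LA + (if dB ≤ dA then (1:ℝ) else 0) * LB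
        - 0 * LA * LB
        = (if dA ≤ dB then LA else 0) + (if dB ≤ dA then LB else 0) := by
      split_ifs <;> ring
    rw [hlim] at T
    refine Tendsto.congr' ?_ T
    filter_upwards [eventually_gt_atTop 0] with ρ hρ
    exact decomp ρ hρ d dA dB (F ρ) (G ρ)

/-- Diversity order of symbol s₁ in CRS-NOMA over α-μ fading:
with d = (1/2)·min(α_sr μ_sr, α_sd μ_sd), the outage probability
P₁(ρ) = A(ρ) + B(ρ) − A(ρ)B(ρ) satisfies ρ^d · P₁(ρ) → C for some constant C > 0. -/
theorem noma_s1_diversity_order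
    (αsr μsr Ωsr αsd μsd Ωsd η₁ K : ℝ)
    (hαsr : 0 < αsr) (hμsr : 0 < μsr) (hΩsr : 0 < Ωsr)
    (hαsd : 0 < αsd) (hμsd : 0 < μsd) (hΩsd : 0 < Ωsd)
    (hη₁ : 0 < η₁) (hK : 0 < K) :
    ∃ C : ℝ, 0 < C ∧
      Tendsto
        (fun ρ : ℝ =>
          ρ ^ ((1 / 2) * min (αsr * μsr) (αsd * μsd)) *
            ((lowerGamma μsr ((μsr / Ωsr ^ αsr) * (η₁ / (ρ * K)) ^ (αsr / 2)) /
                Real.Gamma μsr) +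
              (lowerGamma μsd ((μsd / Ωsd ^ αsd) * (η₁ / (ρ * K)) ^ (αsd / 2)) /
                Real.Gamma μsd) -
              (lowerGamma μsr ((μsr / Ωsr ^ αsr) * (η₁ / (ρ * K)) ^ (αsr / 2)) /
                Real.Gamma μsr) *
              (lowerGamma μsd ((μsd / Ωsd ^ αsd) * (η₁ / (ρ * K)) ^ (αsd / 2)) /
                Real.Gamma μsd)))
        atTop (nhds C) := by
  have hmin : (1 / 2 : ℝ) * min (αsr * μsr) (αsd * μsd)
      = min (αsr * μsr / 2) (αsd * μsd / 2) := by
    rcases le_total (αsr * μsr) (αsd * μsd) with h | h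
    · rw [min_eq_left h, min_eq_left (by linarith : αsr * μsr / 2 ≤ αsd * μsd / 2)]; ring
    · rw [min_eq_right h, min_eq_right (by linarith : αsd * μsd / 2 ≤ αsr * μsr / 2)]; ring
  have hΓsr : 0 < Real.Gamma μsr := Real.Gamma_pos_of_pos hμsr
  have hΓsd : 0 < Real.Gamma μsd := Real.Gamma_pos_of_pos hμsd
  have hLA : 0 < (μsr / Ωsr ^ αsr) ^ μsr * (η₁ / K) ^ (αsr * μsr / 2)
      / (μsr * Real.Gamma μsr) :=
    div_pos (mul_pos (Real.rpow_pos_of_pos (by positivity) _)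
      (Real.rpow_pos_of_pos (by positivity) _)) (mul_pos hμsr hΓsr)
  have hLB : 0 < (μsd / Ωsd ^ αsd) ^ μsd * (η₁ / K) ^ (αsd * μsd / 2)
      / (μsd * Real.Gamma μsd) :=
    div_pos (mul_pos (Real.rpow_pos_of_pos (by positivity) _)
      (Real.rpow_pos_of_pos (by positivity) _)) (mul_pos hμsd hΓsd)
  simp only [hmin]
  exact combine (αsr * μsr / 2) (αsd * μsd / 2) _ _ (by positivity) (by positivity)
    hLA hLB _ _
    (term_tendsto αsr μsr Ωsr η₁ K hαsr hμsr hΩsr hη₁ hK)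
    (term_tendsto αsd μsd Ωsd η₁ K hαsd hμsd hΩsd hη₁ hK)
end

section
/- Let α_sr, μ_sr, Ω_sr, α_rd, μ_rd, Ω_rd, η₁, η₂, K, a₂ all be positive reals. For ρ > 0 define Φ_max(ρ) = max(η₁/(ρK), η₂/(a₂ρ)), A(ρ) = γ(μ_sr, (μ_sr/Ω_sr^{α_sr})·Φ_max(ρ)^{α_sr/2})/Γ(μ_sr), B(ρ) = γ(μ_rd, (μ_rd/Ω_rd^{α_rd})·(η₂/ρ)^{α_rd/2})/Γ(μ_rd), and the outage probability P₂(ρ) = A(ρ) + B(ρ) − A(ρ)B(ρ). Then with d = (1/2)·min(α_sr μ_sr, α_rd μ_rd), there exists a constant C > 0 such that lim_{ρ→∞} ρ^d · P₂(ρ) = C. Hence the diversity order of symbol s₂ in CRS-NOMA is (1/2)·min(α_sr μ_sr, α_rd μ_rd). -/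
open Real Filter

lemma lg_integrable {s : ℝ} (hs : 0 < s) (x : ℝ) :
    IntervalIntegrable (fun t => t ^ (s - 1) * Real.exp (-t)) MeasureTheory.volume 0 x := by
  exact (intervalIntegral.intervalIntegrable_rpow' (by linarith)).mul_continuousOn
    ((Real.continuous_exp.comp continuous_neg).continuousOn)

lemma lg_upper {s : ℝ} (hs : 0 < s) {x : ℝ} (hx : 0 ≤ x) :
    lowerGamma s x ≤ x ^ s / s := by
  have h1 : lowerGamma s x ≤ ∫ t in (0:ℝ)..x, t ^ (s - 1) := by
    apply intervalIntegral.integral_mono_on hx (lg_integrable hs x)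
      (intervalIntegral.intervalIntegrable_rpow' (by linarith))
    intro t ht
    have h0 : (0:ℝ) ≤ t ^ (s-1) := Real.rpow_nonneg ht.1 _
    calc t ^ (s-1) * Real.exp (-t) ≤ t ^ (s-1) * 1 := by
          apply mul_le_mul_of_nonneg_left _ h0
          exact Real.exp_le_one_iff.mpr (by linarith [ht.1])
      _ = t ^ (s-1) := mul_one _
  have h2 : (∫ t in (0:ℝ)..x, t ^ (s - 1)) = x ^ s / s := by
    rw [integral_rpow (Or.inl (by linarith))]
    rw [Real.zero_rpow (by linarith : s - 1 + 1 ≠ 0)]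
    ring_nf
  linarith

lemma lg_lower {s : ℝ} (hs : 0 < s) {x : ℝ} (hx : 0 ≤ x) :
    Real.exp (-x) * (x ^ s / s) ≤ lowerGamma s x := by
  have h1 : (∫ t in (0:ℝ)..x, Real.exp (-x) * t ^ (s - 1)) ≤ lowerGamma s x := by
    apply intervalIntegral.integral_mono_on hx
      ((intervalIntegral.intervalIntegrable_rpow' (by linarith)).const_mul _)
      (lg_integrable hs x)
    intro t ht
    have h0 : (0:ℝ) ≤ t ^ (s-1) := Real.rpow_nonneg ht.1 _
    rw [mul_comm (Real.exp (-x))]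
    exact mul_le_mul_of_nonneg_left (Real.exp_le_exp.mpr (by linarith [ht.2])) h0
  have h2 : (∫ t in (0:ℝ)..x, Real.exp (-x) * t ^ (s - 1))
      = Real.exp (-x) * (x ^ s / s) := by
    rw [intervalIntegral.integral_const_mul, integral_rpow (Or.inl (by linarith)),
      Real.zero_rpow (by linarith : s - 1 + 1 ≠ 0)]
    ring_nf
  linarith

lemma lg_tendsto_zero (s : ℝ) (hs : 0 < s) :
    Tendsto (fun x => x ^ (-s) * lowerGamma s x) (nhdsWithin 0 (Set.Ioi 0))
      (nhds (1 / s)) := by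
  have hg : Tendsto (fun x : ℝ => Real.exp (-x) / s) (nhdsWithin 0 (Set.Ioi 0))
      (nhds (1 / s)) := by
    have : Continuous (fun x : ℝ => Real.exp (-x) / s) := by continuity
    have h := this.tendsto 0
    simp only [neg_zero, Real.exp_zero] at h
    exact h.mono_left nhdsWithin_le_nhds
  have hh : Tendsto (fun _ : ℝ => 1 / s) (nhdsWithin 0 (Set.Ioi 0)) (nhds (1 / s)) :=
    tendsto_const_nhds
  refine tendsto_of_tendsto_of_tendsto_of_le_of_le' hg hh ?_ ?_
  · filter_upwards [self_mem_nhdsWithin] with x (hx : 0 < x)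
    have hxs : (0:ℝ) < x ^ s := Real.rpow_pos_of_pos hx s
    have key := lg_lower hs hx.le
    have : x ^ (-s) = (x ^ s)⁻¹ := Real.rpow_neg hx.le s
    rw [this]
    calc Real.exp (-x) / s = (x ^ s)⁻¹ * (Real.exp (-x) * (x ^ s / s)) := by
          field_simp
      _ ≤ (x ^ s)⁻¹ * lowerGamma s x :=
          mul_le_mul_of_nonneg_left key (by positivity)
  · filter_upwards [self_mem_nhdsWithin] with x (hx : 0 < x)
    have hxs : (0:ℝ) < x ^ s := Real.rpow_pos_of_pos hx s
    have key := lg_upper hs hx.le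
    rw [Real.rpow_neg hx.le s]
    calc (x ^ s)⁻¹ * lowerGamma s x ≤ (x ^ s)⁻¹ * (x ^ s / s) :=
          mul_le_mul_of_nonneg_left key (by positivity)
      _ = 1 / s := by field_simp

lemma lg_tendsto_scaled {s c e : ℝ} (hs : 0 < s) (hc : 0 < c) (he : 0 < e) :
    Tendsto (fun ρ : ℝ => ρ ^ (e * s) * lowerGamma s (c * ρ ^ (-e))) atTop
      (nhds (c ^ s / s)) := by
  have harg : Tendsto (fun ρ : ℝ => c * ρ ^ (-e)) atTop (nhdsWithin 0 (Set.Ioi 0)) := by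
    rw [tendsto_nhdsWithin_iff]
    constructor
    · have := (tendsto_rpow_neg_atTop he).const_mul c
      simpa using this
    · filter_upwards [eventually_gt_atTop (0:ℝ)] with ρ hρ
      exact mul_pos hc (Real.rpow_pos_of_pos hρ _)
  have hcomp := (lg_tendsto_zero s hs).comp harg
  have := hcomp.const_mul (c ^ s)
  have hlim : c ^ s * (1 / s) = c ^ s / s := by ring
  rw [hlim] at this
  apply this.congr'
  filter_upwards [eventually_gt_atTop (0:ℝ)] with ρ hρ
  have hρe : (0:ℝ) < ρ ^ (-e) := Real.rpow_pos_of_pos hρ _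
  have h1 : (c * ρ ^ (-e)) ^ (-s) = c ^ (-s) * ρ ^ (e * s) := by
    rw [Real.mul_rpow hc.le hρe.le, ← Real.rpow_mul hρ.le]
    norm_num
  simp only [Function.comp]
  rw [h1]
  have hcs : c ^ s * c ^ (-s) = 1 := by
    rw [← Real.rpow_add hc]; simp
  calc c ^ s * (c ^ (-s) * ρ ^ (e * s) * lowerGamma s (c * ρ ^ (-e)))
      = (c ^ s * c ^ (-s)) * (ρ ^ (e * s) * lowerGamma s (c * ρ ^ (-e))) := by ring
    _ = ρ ^ (e * s) * lowerGamma s (c * ρ ^ (-e)) := by rw [hcs, one_mul]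

lemma tendsto_shift {f : ℝ → ℝ} {e e' L : ℝ}
    (h : Tendsto (fun ρ => ρ ^ e * f ρ) atTop (nhds L)) (hle : e' ≤ e) :
    Tendsto (fun ρ => ρ ^ e' * f ρ) atTop (nhds (if e' = e then L else 0)) := by
  rcases eq_or_lt_of_le hle with rfl | hlt
  · simpa using h
  · rw [if_neg (ne_of_lt hlt)]
    have h0 : Tendsto (fun ρ : ℝ => ρ ^ (e' - e)) atTop (nhds 0) := by
      have := tendsto_rpow_neg_atTop (by linarith : 0 < e - e')
      simpa [neg_sub] using this
    have hmul := h0.mul h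
    rw [zero_mul] at hmul
    apply hmul.congr'
    filter_upwards [eventually_gt_atTop (0:ℝ)] with ρ hρ
    rw [← mul_assoc, ← Real.rpow_add hρ]
    ring_nf
/-- Diversity order of symbol s₂ in CRS-NOMA over α-μ fading:
with d = (1/2)·min(α_sr μ_sr, α_rd μ_rd), the outage probability
P₂(ρ) = A(ρ) + B(ρ) − A(ρ)B(ρ) satisfies ρ^d · P₂(ρ) → C for some constant C > 0. -/
theorem noma_s2_diversity_order
    (αsr μsr Ωsr αrd μrd Ωrd η₁ η₂ K a₂ : ℝ)
    (hαsr : 0 < αsr) (hμsr : 0 < μsr) (hΩsr : 0 < Ωsr)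
    (hαrd : 0 < αrd) (hμrd : 0 < μrd) (hΩrd : 0 < Ωrd)
    (hη₁ : 0 < η₁) (hη₂ : 0 < η₂) (hK : 0 < K) (ha₂ : 0 < a₂) :
    ∃ C : ℝ, 0 < C ∧
      Tendsto
        (fun ρ : ℝ =>
          ρ ^ ((1 / 2) * min (αsr * μsr) (αrd * μrd)) *
            ((lowerGamma μsr
                ((μsr / Ωsr ^ αsr) *
                  (max (η₁ / (ρ * K)) (η₂ / (a₂ * ρ))) ^ (αsr / 2)) /
                Real.Gamma μsr) +
              (lowerGamma μrd ((μrd / Ωrd ^ αrd) * (η₂ / ρ) ^ (αrd / 2)) /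
                Real.Gamma μrd) -
              (lowerGamma μsr
                ((μsr / Ωsr ^ αsr) *
                  (max (η₁ / (ρ * K)) (η₂ / (a₂ * ρ))) ^ (αsr / 2)) /
                Real.Gamma μsr) *
              (lowerGamma μrd ((μrd / Ωrd ^ αrd) * (η₂ / ρ) ^ (αrd / 2)) /
                Real.Gamma μrd)))
        atTop (nhds C) := by
  set d : ℝ := (1 / 2) * min (αsr * μsr) (αrd * μrd) with hd
  set m : ℝ := max (η₁ / K) (η₂ / a₂) with hm
  have hmpos : 0 < m := lt_max_of_lt_left (div_pos hη₁ hK)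
  set cA : ℝ := (μsr / Ωsr ^ αsr) * m ^ (αsr / 2) with hcA
  set cB : ℝ := (μrd / Ωrd ^ αrd) * η₂ ^ (αrd / 2) with hcB
  have hcApos : 0 < cA :=
    mul_pos (div_pos hμsr (Real.rpow_pos_of_pos hΩsr _)) (Real.rpow_pos_of_pos hmpos _)
  have hcBpos : 0 < cB :=
    mul_pos (div_pos hμrd (Real.rpow_pos_of_pos hΩrd _)) (Real.rpow_pos_of_pos hη₂ _)
  have hΓA : 0 < Real.Gamma μsr := Real.Gamma_pos_of_pos hμsr
  have hΓB : 0 < Real.Gamma μrd := Real.Gamma_pos_of_pos hμrd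
  set gA : ℝ → ℝ := fun ρ => lowerGamma μsr (cA * ρ ^ (-(αsr / 2))) / Real.Gamma μsr
    with hgA
  set gB : ℝ → ℝ := fun ρ => lowerGamma μrd (cB * ρ ^ (-(αrd / 2))) / Real.Gamma μrd
    with hgB
  set LA : ℝ := cA ^ μsr / μsr / Real.Gamma μsr with hLA
  set LB : ℝ := cB ^ μrd / μrd / Real.Gamma μrd with hLB
  have hLApos : 0 < LA := by
    apply div_pos (div_pos (Real.rpow_pos_of_pos hcApos _) hμsr) hΓA
  have hLBpos : 0 < LB := by
    apply div_pos (div_pos (Real.rpow_pos_of_pos hcBpos _) hμrd) hΓB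
  have hA : Tendsto (fun ρ : ℝ => ρ ^ (αsr / 2 * μsr) * gA ρ) atTop (nhds LA) := by
    have := (lg_tendsto_scaled hμsr hcApos (half_pos hαsr)).div_const (Real.Gamma μsr)
    apply this.congr
    intro ρ
    rw [hgA]
    ring
  have hB : Tendsto (fun ρ : ℝ => ρ ^ (αrd / 2 * μrd) * gB ρ) atTop (nhds LB) := by
    have := (lg_tendsto_scaled hμrd hcBpos (half_pos hαrd)).div_const (Real.Gamma μrd)
    apply this.congr
    intro ρ
    rw [hgB]
    ring
  have hdA : d ≤ αsr / 2 * μsr := by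
    have := min_le_left (αsr * μsr) (αrd * μrd)
    rw [hd]; linarith
  have hdB : d ≤ αrd / 2 * μrd := by
    have := min_le_right (αsr * μsr) (αrd * μrd)
    rw [hd]; linarith
  have tA := tendsto_shift hA hdA
  have tB := tendsto_shift hB hdB
  set LA' : ℝ := if d = αsr / 2 * μsr then LA else 0 with hLA'
  set LB' : ℝ := if d = αrd / 2 * μrd then LB else 0 with hLB'
  have hLA'nonneg : 0 ≤ LA' := by rw [hLA']; split <;> [exact hLApos.le; exact le_rfl]
  have hLB'nonneg : 0 ≤ LB' := by rw [hLB']; split <;> [exact hLBpos.le; exact le_rfl]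
  have hgB0 : Tendsto gB atTop (nhds 0) := by
    have h0 := (tendsto_rpow_neg_atTop (by positivity : (0:ℝ) < αrd / 2 * μrd)).mul hB
    rw [zero_mul] at h0
    apply h0.congr'
    filter_upwards [eventually_gt_atTop (0:ℝ)] with ρ hρ
    rw [← mul_assoc, ← Real.rpow_add hρ]
    simp
  have tAB := tA.mul hgB0
  rw [mul_zero] at tAB
  have hCpos : 0 < LA' + LB' := by
    rcases min_choice (αsr * μsr) (αrd * μrd) with hmin | hmin
    · have : LA' = LA := by
        rw [hLA', if_pos (by rw [hd, hmin]; ring)]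
      linarith
    · have : LB' = LB := by
        rw [hLB', if_pos (by rw [hd, hmin]; ring)]
      linarith
  refine ⟨LA' + LB', hCpos, ?_⟩
  have hfin := (tA.add tB).sub tAB
  rw [sub_zero] at hfin
  apply hfin.congr'
  filter_upwards [eventually_gt_atTop (0:ℝ)] with ρ hρ
  have hmax : max (η₁ / (ρ * K)) (η₂ / (a₂ * ρ)) = m / ρ := by
    rw [hm]
    rw [show η₁ / (ρ * K) = (η₁ / K) / ρ by rw [div_div, mul_comm],
      show η₂ / (a₂ * ρ) = (η₂ / a₂) / ρ by rw [div_div],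
      max_div_div_right hρ.le]
  have hargA : (μsr / Ωsr ^ αsr) * (max (η₁ / (ρ * K)) (η₂ / (a₂ * ρ))) ^ (αsr / 2)
      = cA * ρ ^ (-(αsr / 2)) := by
    rw [hmax, Real.div_rpow hmpos.le hρ.le, Real.rpow_neg hρ.le, hcA]
    rw [div_eq_mul_inv]
    ring
  have hargB : (μrd / Ωrd ^ αrd) * (η₂ / ρ) ^ (αrd / 2) = cB * ρ ^ (-(αrd / 2)) := by
    rw [Real.div_rpow hη₂.le hρ.le, Real.rpow_neg hρ.le, hcB]
    rw [div_eq_mul_inv]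
    ring
  rw [hargA, hargB]
  rw [hgA, hgB]
  ring
end

section
/- Let X and Y be independent real-valued random variables on a probability space with probability measure ℙ such that for all t ≥ 0, ℙ(X ≤ t) = γ(μ_sr, (μ_sr/Ω_sr^{α_sr})·t^{α_sr/2})/Γ(μ_sr) and ℙ(Y ≤ t) = γ(μ_rd, (μ_rd/Ω_rd^{α_rd})·t^{α_rd/2})/Γ(μ_rd), where α_sr, μ_sr, Ω_sr, α_rd, μ_rd, Ω_rd > 0. Let Φ₁ ≥ 0, Φ₂ ≥ 0, c ≥ 0, set Φ_max = max(Φ₁, Φ₂), and define the disjoint events E₁ = {X < Φ₁}, E₂ = {Φ₁ ≤ X < Φ₂}, E₃ = {X ≥ Φ_max and Y < c}. Then ℙ(E₁ ∪ E₂ ∪ E₃) = γ(μ_sr, (μ_sr/Ω_sr^{α_sr})Φ_max^{α_sr/2})/Γ(μ_sr) + γ(μ_rd, (μ_rd/Ω_rd^{α_rd})c^{α_rd/2})/Γ(μ_rd) − [γ(μ_sr, (μ_sr/Ω_sr^{α_sr})Φ_max^{α_sr/2})/Γ(μ_sr)]·[γ(μ_rd, (μ_rd/Ω_rd^{α_rd})c^{α_rd/2})/Γ(μ_rd)].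 -/
open MeasureTheory ProbabilityTheory Real Set Filter Topology

lemma lowerGamma_integrable {μ : ℝ} (hμ : 0 < μ) (x : ℝ) (hx : 0 ≤ x) :
    IntegrableOn (fun t : ℝ => t ^ (μ - 1) * Real.exp (-t)) (Set.uIcc 0 x) := by
  rw [Set.uIcc_of_le hx]
  rw [integrableOn_Icc_iff_integrableOn_Ioc]
  have h := (Real.GammaIntegral_convergent hμ).mono_set (Set.Ioc_subset_Ioi_self : Set.Ioc (0:ℝ) x ⊆ Set.Ioi 0)
  exact h.congr_fun (fun t _ => mul_comm _ _) measurableSet_Ioc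

lemma lowerGamma_continuousOn {μ : ℝ} (hμ : 0 < μ) (x : ℝ) (hx : 0 ≤ x) :
    ContinuousOn (lowerGamma μ) (Set.Icc 0 x) := by
  have := intervalIntegral.continuousOn_primitive_interval (a := 0) (b := x)
    (lowerGamma_integrable hμ x hx)
  rwa [Set.uIcc_of_le hx] at this

lemma lowerGamma_zero (μ : ℝ) : lowerGamma μ 0 = 0 := intervalIntegral.integral_same

lemma prob_lt_eq {μ k a : ℝ} (hμ : 0 < μ) (hk : 0 < k) (ha : 0 < a)
    {S : Type*} [MeasurableSpace S] (P : Measure S) [IsProbabilityMeasure P] (X : S → ℝ)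
    (hcdf : ∀ t : ℝ, 0 ≤ t →
      (P {ω | X ω ≤ t}).toReal = lowerGamma μ (k * t ^ a) / Real.Gamma μ) :
    ∀ t : ℝ, 0 ≤ t →
      (P {ω | X ω < t}).toReal = lowerGamma μ (k * t ^ a) / Real.Gamma μ := by
  intro t ht
  rcases eq_or_lt_of_le ht with rfl | ht
  · have h0 : (P {ω | X ω ≤ (0:ℝ)}).toReal = 0 := by
      rw [hcdf 0 le_rfl, Real.zero_rpow ha.ne', mul_zero, lowerGamma_zero, zero_div]
    have hfin : P {ω | X ω ≤ (0:ℝ)} ≠ ⊤ := measure_ne_top _ _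
    have h0' : P {ω | X ω ≤ (0:ℝ)} = 0 := by
      rwa [ENNReal.toReal_eq_zero_iff, or_iff_left hfin] at h0
    have : P {ω | X ω < (0:ℝ)} = 0 :=
      measure_mono_null (fun ω (h : X ω < 0) => le_of_lt h) h0'
    rw [this]
    simp [Real.zero_rpow ha.ne', lowerGamma_zero]
  · -- t > 0
    apply le_antisymm
    · have hsub : {ω | X ω < t} ⊆ {ω | X ω ≤ t} := Set.setOf_subset_setOf.2 fun ω h => le_of_lt h
      calc (P {ω | X ω < t}).toReal ≤ (P {ω | X ω ≤ t}).toReal :=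
            ENNReal.toReal_mono (measure_ne_top _ _) (measure_mono hsub)
        _ = _ := hcdf t ht.le
    · -- limit from the left
      set F : ℝ → ℝ := fun s => lowerGamma μ (k * s ^ a) / Real.Gamma μ with hF
      have hcont : ContinuousWithinAt F (Set.Icc 0 t) t := by
        have hinner : ContinuousWithinAt (fun s : ℝ => k * s ^ a) (Set.Icc 0 t) t :=
          (continuousAt_const.mul
            (Real.continuousAt_rpow_const t a (Or.inl ht.ne'))).continuousWithinAt
        have houter : ContinuousOn (fun y => lowerGamma μ y / Real.Gamma μ)
            (Set.Icc 0 (k * t ^ a)) :=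
          (lowerGamma_continuousOn hμ _ (by positivity)).div_const _
        have hmaps : Set.MapsTo (fun s : ℝ => k * s ^ a) (Set.Icc 0 t)
            (Set.Icc 0 (k * t ^ a)) := by
          intro s hs
          constructor
          · exact mul_nonneg hk.le (Real.rpow_nonneg hs.1 a)
          · exact mul_le_mul_of_nonneg_left
              (Real.rpow_le_rpow hs.1 hs.2 ha.le) hk.le
        exact ContinuousWithinAt.comp (f := fun s : ℝ => k * s ^ a)
          (g := fun y => lowerGamma μ y / Real.Gamma μ)
          (houter _ (hmaps (Set.right_mem_Icc.2 ht.le))) hinner hmaps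
      have hne : (𝓝[Set.Ico 0 t] t).NeBot := right_nhdsWithin_Ico_neBot ht
      have htend : Tendsto F (𝓝[Set.Ico 0 t] t) (𝓝 (F t)) :=
        hcont.tendsto.mono_left (nhdsWithin_mono _ Set.Ico_subset_Icc_self)
      refine le_of_tendsto htend ?_
      filter_upwards [self_mem_nhdsWithin] with s hs
      show lowerGamma μ (k * s ^ a) / Real.Gamma μ ≤ (P {ω | X ω < t}).toReal
      rw [← hcdf s hs.1]
      exact ENNReal.toReal_mono (measure_ne_top _ _)
        (measure_mono (fun ω (h : X ω ≤ s) => lt_of_le_of_lt h hs.2))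

/-- Closed-form outage probability of symbol s₂ in CRS-NOMA over α-μ fading:
with disjoint events E₁ = {X < Φ₁}, E₂ = {Φ₁ ≤ X < Φ₂}, E₃ = {X ≥ Φ_max, Y < c},
ℙ(E₁ ∪ E₂ ∪ E₃) = F_sr(Φ_max) + F_rd(c) − F_sr(Φ_max)F_rd(c). -/
theorem noma_s2_outage_probability_closed_form
    (αsr μsr Ωsr αrd μrd Ωrd : ℝ)
    (hαsr : 0 < αsr) (hμsr : 0 < μsr) (hΩsr : 0 < Ωsr)
    (hαrd : 0 < αrd) (hμrd : 0 < μrd) (hΩrd : 0 < Ωrd)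
    {S : Type*} [MeasurableSpace S] (P : Measure S) [IsProbabilityMeasure P]
    (X Y : S → ℝ) (hX : Measurable X) (hY : Measurable Y)
    (hindep : IndepFun X Y P)
    (hXcdf : ∀ t : ℝ, 0 ≤ t →
      (P {ω | X ω ≤ t}).toReal =
        lowerGamma μsr ((μsr / Ωsr ^ αsr) * t ^ (αsr / 2)) / Real.Gamma μsr)
    (hYcdf : ∀ t : ℝ, 0 ≤ t →
      (P {ω | Y ω ≤ t}).toReal =
        lowerGamma μrd ((μrd / Ωrd ^ αrd) * t ^ (αrd / 2)) / Real.Gamma μrd)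
    (Φ₁ Φ₂ c : ℝ) (hΦ₁ : 0 ≤ Φ₁) (hΦ₂ : 0 ≤ Φ₂) (hc : 0 ≤ c) :
    (P ({ω | X ω < Φ₁} ∪ {ω | Φ₁ ≤ X ω ∧ X ω < Φ₂} ∪
        {ω | max Φ₁ Φ₂ ≤ X ω ∧ Y ω < c})).toReal =
      lowerGamma μsr ((μsr / Ωsr ^ αsr) * (max Φ₁ Φ₂) ^ (αsr / 2)) /
          Real.Gamma μsr +
        lowerGamma μrd ((μrd / Ωrd ^ αrd) * c ^ (αrd / 2)) / Real.Gamma μrd -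
        (lowerGamma μsr ((μsr / Ωsr ^ αsr) * (max Φ₁ Φ₂) ^ (αsr / 2)) /
            Real.Gamma μsr) *
          (lowerGamma μrd ((μrd / Ωrd ^ αrd) * c ^ (αrd / 2)) / Real.Gamma μrd) := by
  set M := max Φ₁ Φ₂ with hM
  have hMnn : 0 ≤ M := le_trans hΦ₁ (le_max_left _ _)
  have hksr : 0 < μsr / Ωsr ^ αsr := div_pos hμsr (Real.rpow_pos_of_pos hΩsr _)
  have hkrd : 0 < μrd / Ωrd ^ αrd := div_pos hμrd (Real.rpow_pos_of_pos hΩrd _)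
  have hA := prob_lt_eq hμsr hksr (half_pos hαsr) P X hXcdf M hMnn
  have hB := prob_lt_eq hμrd hkrd (half_pos hαrd) P Y hYcdf c hc
  set a : ℝ := lowerGamma μsr ((μsr / Ωsr ^ αsr) * M ^ (αsr / 2)) / Real.Gamma μsr
  set b : ℝ := lowerGamma μrd ((μrd / Ωrd ^ αrd) * c ^ (αrd / 2)) / Real.Gamma μrd
  have hset : ({ω | X ω < Φ₁} ∪ {ω | Φ₁ ≤ X ω ∧ X ω < Φ₂} ∪
      {ω | M ≤ X ω ∧ Y ω < c}) =
      (X ⁻¹' Set.Iio M) ∪ ((X ⁻¹' Set.Ici M) ∩ (Y ⁻¹' Set.Iio c)) := by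
    ext ω
    simp only [Set.mem_union, Set.mem_setOf_eq, Set.mem_preimage, Set.mem_inter_iff,
      Set.mem_Iio, Set.mem_Ici]
    constructor
    · rintro ((h | ⟨h1, h2⟩) | ⟨h1, h2⟩)
      · exact Or.inl (lt_of_lt_of_le h (le_max_left _ _))
      · exact Or.inl (lt_of_lt_of_le h2 (le_max_right _ _))
      · exact Or.inr ⟨h1, h2⟩
    · rintro (h | ⟨h1, h2⟩)
      · rcases lt_or_ge (X ω) Φ₁ with h1 | h1
        · exact Or.inl (Or.inl h1)
        · rcases lt_max_iff.1 h with h2 | h2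
          · exact absurd h2 (not_lt.2 h1)
          · exact Or.inl (Or.inr ⟨h1, h2⟩)
      · exact Or.inr ⟨h1, h2⟩
  rw [hset]
  have hmA : MeasurableSet (X ⁻¹' Set.Iio M) := hX measurableSet_Iio
  have hmB : MeasurableSet ((X ⁻¹' Set.Ici M) ∩ (Y ⁻¹' Set.Iio c)) :=
    (hX measurableSet_Ici).inter (hY measurableSet_Iio)
  have hdisj : Disjoint (X ⁻¹' Set.Iio M) ((X ⁻¹' Set.Ici M) ∩ (Y ⁻¹' Set.Iio c)) := by
    rw [Set.disjoint_left]
    intro ω h1 h2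
    simp only [Set.mem_preimage, Set.mem_Iio, Set.mem_inter_iff, Set.mem_Ici] at h1 h2
    exact absurd h2.1 (not_le.2 h1)
  rw [measure_union hdisj hmB]
  have hind := (ProbabilityTheory.indepFun_iff_measure_inter_preimage_eq_mul.1 hindep)
    (Set.Ici M) (Set.Iio c) measurableSet_Ici measurableSet_Iio
  rw [hind, ENNReal.toReal_add (measure_ne_top _ _) (by
    exact ENNReal.mul_ne_top (measure_ne_top _ _) (measure_ne_top _ _)),
    ENNReal.toReal_mul]
  have hAval : (P (X ⁻¹' Set.Iio M)).toReal = a := by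
    have : X ⁻¹' Set.Iio M = {ω | X ω < M} := rfl
    rw [this, hA]
  have hAc : (P (X ⁻¹' Set.Ici M)).toReal = 1 - a := by
    have h1 : X ⁻¹' Set.Ici M = (X ⁻¹' Set.Iio M)ᶜ := by
      ext ω; simp [not_lt]
    rw [h1, measure_compl hmA (measure_ne_top _ _), measure_univ,
      ENNReal.toReal_sub_of_le prob_le_one ENNReal.one_ne_top, ENNReal.toReal_one, hAval]
  have hBval : (P (Y ⁻¹' Set.Iio c)).toReal = b := by
    have : Y ⁻¹' Set.Iio c = {ω | Y ω < c} := rfl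
    rw [this, hB]
  rw [hAval, hAc, hBval]
  ring
end
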